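/- Let H > 0, 0 ≤ ρ_R < 1 and z_R ∈ ℝ. The function z(ρ) = (H(ρ−ρ_R) + z_R (1−ρ_R)^H)/(1−ρ)^H satisfies: (i) z(ρ_R) = z_R; (ii) z′(ρ) = H z(ρ)/(1−ρ) + H/(1−ρ)^H for all ρ ∈ [0,1), so it is an integral curve of the second characteristic field; (iii) z(ρ)(1−ρ)^H − z_R(1−ρ_R)^H = H(ρ−ρ_R) for all ρ ∈ [0,1), i.e. the Rankine–Hugoniot conditions (1/H)(z(1−ρ)^H − z_R(1−ρ_R)^H) = s(ρ−ρ_R) and z−z_R = s(z−z_R) hold along this curve with speed s = 1. Hence the 2-shock curve and the 2-integral curve coincide. -/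

import Mathlib

/-- The 2-integral curve z(ρ) = (H(ρ-ρ_R) + z_R(1-ρ_R)^H)/(1-ρ)^H passes through
(ρ_R, z_R), solves z' = Hz/(1-ρ) + H/(1-ρ)^H, and satisfies the Rankine–Hugoniot
conditions with speed s = 1; hence 2-shock and 2-integral curves coincide. -/
theorem stmt3 (H ρR zR : ℝ) (hH : 0 < H) (hρR0 : 0 ≤ ρR) (hρR1 : ρR < 1) :
    let z : ℝ → ℝ := fun ρ => (H * (ρ - ρR) + zR * (1 - ρR) ^ H) / (1 - ρ) ^ H
    z ρR = zR ∧
    (∀ ρ ∈ Set.Ico (0 : ℝ) 1, HasDerivAt z (H * z ρ / (1 - ρ) + H / (1 - ρ) ^ H) ρ) ∧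
    (∀ ρ ∈ Set.Ico (0 : ℝ) 1, z ρ * (1 - ρ) ^ H - zR * (1 - ρR) ^ H = H * (ρ - ρR)) ∧
    (∀ ρ ∈ Set.Ico (0 : ℝ) 1,
      (1 / H) * (z ρ * (1 - ρ) ^ H - zR * (1 - ρR) ^ H) = 1 * (ρ - ρR) ∧
      z ρ - zR = 1 * (z ρ - zR)) := by
  intro z
  have hzpos : ∀ ρ : ℝ, ρ < 1 → (0:ℝ) < (1 - ρ) ^ H :=
    fun ρ h => Real.rpow_pos_of_pos (by linarith) H
  have hRH : ∀ ρ ∈ Set.Ico (0:ℝ) 1,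
      z ρ * (1 - ρ) ^ H - zR * (1 - ρR) ^ H = H * (ρ - ρR) := by
    intro ρ hρ
    have hg := (hzpos ρ hρ.2).ne'
    simp only [z]
    field_simp
    ring
  refine ⟨?_, ?_, hRH, ?_⟩
  · have hg := (hzpos ρR hρR1).ne'
    simp only [z, sub_self, mul_zero, zero_add]
    field_simp
  · intro ρ hρ
    have h1 : (0:ℝ) < 1 - ρ := by linarith [hρ.2]
    have hg := (hzpos ρ hρ.2).ne'
    have hgd : HasDerivAt (fun ρ : ℝ => (1 - ρ) ^ H) (H * (1 - ρ) ^ (H - 1) * (-1)) ρ := by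
      have := (Real.hasDerivAt_rpow_const (x := 1 - ρ) (p := H) (Or.inl h1.ne')).comp ρ
        (((hasDerivAt_id ρ).const_sub 1))
      simpa [Function.comp_def] using this
    have hN : HasDerivAt (fun ρ : ℝ => H * (ρ - ρR) + zR * (1 - ρR) ^ H) H ρ := by
      simpa using (((hasDerivAt_id ρ).sub_const ρR).const_mul H).add_const (zR * (1 - ρR) ^ H)
    have hdiv := hN.div hgd hg
    refine hdiv.congr_deriv ?_
    have key : (1 - ρ) ^ (H - 1) = (1 - ρ) ^ H / (1 - ρ) := by
      rw [Real.rpow_sub h1, Real.rpow_one]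
    rw [key]
    simp only [z]
    field_simp
    ring
  · intro ρ hρ
    exact ⟨by rw [hRH ρ hρ]; field_simp, by ring⟩
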